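/- In the real-valued semantics, the induction axiom □(φ⇒○φ) ⇒ (φ⇒□φ) is globally true in every real Gödel temporal model, i.e. its truth value is 1 at every time point. -/
import Mathlib


/-- Formulas of the Gödel temporal language. -/
inductive GF where
  | var : Nat → GF
  | and : GF → GF → GF
  | or : GF → GF → GF
  | imp : GF → GF → GF
  | coimp : GF → GF → GF
  | next : GF → GF
  | dia : GF → GF
  | box : GF → GF
deriving DecidableEq

/-- ⊥ := p ⇐ p -/
def GF.bot : GF := .coimp (.var 0) (.var 0)
/-- ⊤ := p ⇒ p -/
def GF.top : GF := .imp (.var 0) (.var 0)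
/-- ¬φ := φ ⇒ ⊥ -/
def GF.neg (φ : GF) : GF := .imp φ .bot
/-- φ ⟺ ψ := (φ⇒ψ) ∧ (ψ⇒φ) -/
def GF.iffF (φ ψ : GF) : GF := .and (.imp φ ψ) (.imp ψ φ)

/-- A real Gödel temporal model: a flow (T,S) with a [0,1]-valued valuation
satisfying the standard Gödel semantic clauses. -/
structure RModel where
  T : Type
  S : T → T
  V : GF → T → ℝ
  mem_Icc : ∀ φ t, V φ t ∈ Set.Icc (0:ℝ) 1
  bot_eq : ∀ t, V .bot t = 0
  and_eq : ∀ φ ψ t, V (.and φ ψ) t = min (V φ t) (V ψ t)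
  or_eq : ∀ φ ψ t, V (.or φ ψ) t = max (V φ t) (V ψ t)
  imp_eq : ∀ φ ψ t, V (.imp φ ψ) t = if V φ t ≤ V ψ t then 1 else V ψ t
  coimp_eq : ∀ φ ψ t, V (.coimp φ ψ) t = if V ψ t < V φ t then V φ t else 0
  next_eq : ∀ φ t, V (.next φ) t = V φ (S t)
  dia_eq : ∀ φ t, V (.dia φ) t = ⨆ n : ℕ, V φ (S^[n] t)
  box_eq : ∀ φ t, V (.box φ) t = ⨅ n : ℕ, V φ (S^[n] t)

/-- In the real semantics, the induction axiom □(φ⇒○φ) ⇒ (φ⇒□φ) has truth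
value 1 at every time point of every real Gödel temporal model. -/
theorem stmt7 (M : RModel) (φ : GF) (t : M.T) :
    M.V (.imp (.box (.imp φ (.next φ))) (.imp φ (.box φ))) t = 1 := by
  have hbdd : ∀ ψ : GF, BddBelow (Set.range fun n : ℕ => M.V ψ (M.S^[n] t)) := by
    intro ψ
    exact ⟨0, by rintro x ⟨n, rfl⟩; exact (M.mem_Icc ψ _).1⟩
  set a := M.V (.box (.imp φ (.next φ))) t with ha
  have key : ∀ n : ℕ, min a (M.V φ t) ≤ M.V φ (M.S^[n] t) := by
    intro n
    induction n with
    | zero => simp only [Function.iterate_zero_apply]; exact min_le_right _ _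
    | succ n ih =>
      have h1 : a ≤ M.V (.imp φ (.next φ)) (M.S^[n] t) := by
        rw [ha, M.box_eq]
        exact ciInf_le (hbdd _) n
      rw [M.imp_eq, M.next_eq] at h1
      rw [Function.iterate_succ_apply']
      split at h1
      · exact le_trans ih (by assumption)
      · exact le_trans (min_le_left _ _) h1
  have hinf : min a (M.V φ t) ≤ ⨅ n : ℕ, M.V φ (M.S^[n] t) := le_ciInf key
  have hle : a ≤ M.V (.imp φ (.box φ)) t := by
    rw [M.imp_eq]
    split
    · exact (M.mem_Icc _ _).2
    · rename_i h
      rw [M.box_eq] at h ⊢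
      rcases min_cases a (M.V φ t) with ⟨he, _⟩ | ⟨he, _⟩
      · rw [he] at hinf; exact hinf
      · rw [he] at hinf; exact absurd hinf h
  rw [M.imp_eq, if_pos hle]
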